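/- arXiv:1511.01960 — 2 statements merged into one kernel-verified Lean document; each statement's English description precedes it below -/
import Mathlib

section
/- Let a be a sensing action for fluent f, executable in state (M,s), and suppose (M,s) is consistency preserving for a (no fully or partially observant agent believes f or believes ¬f at any world). Let (M',s') be the successor given by the step transition for sensing actions. Then: (1) if (M,s) ⊨ f then (M',s') ⊨ C_F f, and if (M,s) ⊨ ¬f then (M',s') ⊨ C_F ¬f, where F is the set of fully observant agents; and (2) for every oblivious agent i and every belief formula ψ, (M',s') ⊨ B_i ψ iff (M,s) ⊨ B_i ψ. -/
/-- Belief formulae over a set of agents `A` and a set of fluents `F`: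
propositional formulae extended with belief operators `B_i` (`bel`),
group knowledge `E_α` (`ebel`) and common knowledge `C_α` (`cbel`). -/
inductive BForm (A F : Type) : Type where
  | top  : BForm A F
  | atom : F → BForm A F
  | neg  : BForm A F → BForm A F
  | conj : BForm A F → BForm A F → BForm A F
  | disj : BForm A F → BForm A F → BForm A F
  | bel  : A → BForm A F → BForm A F
  | ebel : Set A → BForm A F → BForm A F
  | cbel : Set A → BForm A F → BForm A F

/-- A Kripke structure: a valuation of fluents at each world and an
accessibility relation for each agent. -/
structure Kripke (A W F : Type) where
  val : W → F → Prop
  rel : A → W → W → Prop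

/-- Iterated group operator: `Esat M α P k w` says `E_α^k P` holds at `w`. -/
def Esat {A W F : Type} (M : Kripke A W F) (α : Set A) (P : W → Prop) : ℕ → W → Prop
  | 0, w => P w
  | k + 1, w => ∀ i ∈ α, ∀ v, M.rel i w v → Esat M α P k v

/-- Kripke satisfaction of belief formulae.  Common knowledge `C_α φ` holds at
`w` iff `E_α^k φ` holds at `w` for every `k ≥ 0`. -/
def sat {A W F : Type} (M : Kripke A W F) : W → BForm A F → Prop
  | _, .top => True
  | w, .atom f => M.val w f
  | w, .neg φ => ¬ sat M w φ
  | w, .conj φ ψ => sat M w φ ∧ sat M w ψ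
  | w, .disj φ ψ => sat M w φ ∨ sat M w ψ
  | w, .bel i φ => ∀ v, M.rel i w v → sat M v φ
  | w, .ebel α φ => ∀ i ∈ α, ∀ v, M.rel i w v → sat M v φ
  | w, .cbel α φ => ∀ k : ℕ, Esat M α (fun v => sat M v φ) k w

/-- `M` is an S5 structure: each accessibility relation is an equivalence
relation (reflexive, symmetric, transitive). -/
def S5 {A W F : Type} (M : Kripke A W F) : Prop := ∀ i, Equivalence (M.rel i)

/-- Reachability via finite paths over the union of all accessibility relations. -/
def reach {A W F : Type} (M : Kripke A W F) : W → W → Prop :=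
  Relation.ReflTransGen (fun u v => ∃ i, M.rel i u v)

/-- Reachability via finite paths labeled by agents in `α` only. -/
def reachIn {A W F : Type} (M : Kripke A W F) (α : Set A) : W → W → Prop :=
  Relation.ReflTransGen (fun u v => ∃ i ∈ α, M.rel i u v)

/-- Two pointed Kripke structures are equivalent if they satisfy the same
belief formulae. -/
def equivState {A W W' F : Type} (M : Kripke A W F) (s : W) (M' : Kripke A W' F) (s' : W') : Prop :=
  ∀ φ : BForm A F, sat M s φ ↔ sat M' s' φ

/-- Fluent (purely propositional) formulae: no modal operators. -/
def IsProp {A F : Type} : BForm A F → Prop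
  | .top => True
  | .atom _ => True
  | .neg φ => IsProp φ
  | .conj φ ψ => IsProp φ ∧ IsProp ψ
  | .disj φ ψ => IsProp φ ∧ IsProp ψ
  | .bel _ _ => False
  | .ebel _ _ => False
  | .cbel _ _ => False

/-- The successor Kripke structure after a sensing action for fluent `f`.
It is built from a disjoint replica of `M` (the `Sum.inr` worlds, restricted to
worlds where the precondition `exec` holds) glued onto the original `M`
(the `Sum.inl` worlds): in the replica only edges of fully (`Fo`) or partially
(`Po`) observant agents are kept, and `Fo`-edges additionally require the two
endpoints to agree on `f`; oblivious agents point from replica worlds back into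
the original copy of `M`. -/
def senseSucc {A W F : Type} (M : Kripke A W F) (exec : W → Prop) (f : F)
    (Fo Po : Set A) : Kripke A (W ⊕ {u : W // exec u}) F where
  val x := match x with
    | Sum.inl u => M.val u
    | Sum.inr u => M.val u.1
  rel i x y := match x, y with
    | Sum.inl u, Sum.inl v => M.rel i u v
    | Sum.inr u, Sum.inr v =>
        (i ∈ Fo ∧ M.rel i u.1 v.1 ∧ (M.val u.1 f ↔ M.val v.1 f)) ∨ (i ∈ Po ∧ M.rel i u.1 v.1)
    | Sum.inr u, Sum.inl v => i ∉ Fo ∧ i ∉ Po ∧ M.rel i u.1 v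
    | Sum.inl _, Sum.inr _ => False

lemma esat_mono {A W F : Type} {M : Kripke A W F} {α : Set A} {P Q : W → Prop}
    (h : ∀ w, P w → Q w) : ∀ k w, Esat M α P k w → Esat M α Q k w
  | 0, w, hp => h w hp
  | k+1, _, hp => fun i hi v hv => esat_mono h k v (hp i hi v hv)

lemma rel_inl {A W F : Type} (M : Kripke A W F) (exec : W → Prop) (f : F)
    (Fo Po : Set A) (i : A) (u : W) (y : W ⊕ {u : W // exec u}) :
    (senseSucc M exec f Fo Po).rel i (Sum.inl u) y ↔ ∃ v, y = Sum.inl v ∧ M.rel i u v := by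
  cases y <;> simp [senseSucc]

lemma esat_inl {A W F : Type} {M : Kripke A W F} {exec : W → Prop} {f : F}
    {Fo Po : Set A} {α : Set A}
    {P' : (W ⊕ {u : W // exec u}) → Prop} {P : W → Prop}
    (h : ∀ v, P' (Sum.inl v) ↔ P v) :
    ∀ (k : ℕ) (u : W),
      Esat (senseSucc M exec f Fo Po) α P' k (Sum.inl u) ↔ Esat M α P k u
  | 0, u => h u
  | k+1, u => by
    constructor
    · intro H i hi v hv
      exact (esat_inl h k v).mp (H i hi (Sum.inl v) hv)
    · intro H i hi y hy
      rcases (rel_inl M exec f Fo Po i u y).mp hy with ⟨v, rfl, hr⟩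
      exact (esat_inl h k v).mpr (H i hi v hr)

lemma sat_inl {A W F : Type} (M : Kripke A W F) (exec : W → Prop) (f : F)
    (Fo Po : Set A) :
    ∀ (ψ : BForm A F) (u : W),
      sat (senseSucc M exec f Fo Po) (Sum.inl u) ψ ↔ sat M u ψ
  | .top, _ => Iff.rfl
  | .atom _, _ => Iff.rfl
  | .neg φ, u => by
      simp only [sat]; rw [sat_inl M exec f Fo Po φ u]
  | .conj φ χ, u => by
      simp only [sat]; rw [sat_inl M exec f Fo Po φ u, sat_inl M exec f Fo Po χ u]
  | .disj φ χ, u => by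
      simp only [sat]; rw [sat_inl M exec f Fo Po φ u, sat_inl M exec f Fo Po χ u]
  | .bel i φ, u => by
      simp only [sat]
      constructor
      · intro H v hv
        exact (sat_inl M exec f Fo Po φ v).mp (H (Sum.inl v) hv)
      · intro H y hy
        rcases (rel_inl M exec f Fo Po i u y).mp hy with ⟨v, rfl, hr⟩
        exact (sat_inl M exec f Fo Po φ v).mpr (H v hr)
  | .ebel α φ, u => by
      simp only [sat]
      constructor
      · intro H i hi v hv
        exact (sat_inl M exec f Fo Po φ v).mp (H i hi (Sum.inl v) hv)
      · intro H i hi y hy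
        rcases (rel_inl M exec f Fo Po i u y).mp hy with ⟨v, rfl, hr⟩
        exact (sat_inl M exec f Fo Po φ v).mpr (H i hi v hr)
  | .cbel α φ, u => by
      simp only [sat]
      constructor <;> intro H k
      · exact (esat_inl (fun v => sat_inl M exec f Fo Po φ v) k u).mp (H k)
      · exact (esat_inl (fun v => sat_inl M exec f Fo Po φ v) k u).mpr (H k)

lemma esat_inr {A W F : Type} (M : Kripke A W F) (exec : W → Prop) (f : F)
    (Fo Po : Set A) (hdisj : Disjoint Fo Po) (b : Prop) :
    ∀ (k : ℕ) (u : {u : W // exec u}), (M.val u.1 f ↔ b) →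
      Esat (senseSucc M exec f Fo Po) Fo
        (fun v => ((senseSucc M exec f Fo Po).val v f ↔ b)) k (Sum.inr u)
  | 0, _, h => h
  | k+1, u, h => by
    intro i hi y hy
    cases y with
    | inl v => exact absurd hi hy.1
    | inr v =>
      rcases hy with ⟨_, _, hagree⟩ | ⟨hiPo, _⟩
      · exact esat_inr M exec f Fo Po hdisj b k v (hagree.symm.trans h)
      · exact absurd hiPo (Set.disjoint_left.mp hdisj hi)

/-- For a sensing action for fluent `f`, executable in the
consistency-preserving state `(M,s)`, with disjoint fully observant group `Fo`
and partially observant group `Po` (all other agents oblivious):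
(1) in the successor the group `Fo` commonly knows the actual value of `f`;
(2) the beliefs of every oblivious agent are unchanged. -/
theorem stmt11 {A W F : Type} (M : Kripke A W F) (s : W)
    (exec : W → Prop) (f : F) (Fo Po : Set A)
    (hdisj : Disjoint Fo Po) (hs : exec s)
    (hcp : ∀ u : W, ∀ i ∈ Fo ∪ Po,
      ¬ sat M u (.disj (.bel i (.atom f)) (.bel i (.neg (.atom f))))) :
    ((sat M s (.atom f) →
        sat (senseSucc M exec f Fo Po) (Sum.inr ⟨s, hs⟩) (.cbel Fo (.atom f))) ∧
     (sat M s (.neg (.atom f)) →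
        sat (senseSucc M exec f Fo Po) (Sum.inr ⟨s, hs⟩) (.cbel Fo (.neg (.atom f))))) ∧
    (∀ i : A, i ∉ Fo → i ∉ Po → ∀ ψ : BForm A F,
      (sat (senseSucc M exec f Fo Po) (Sum.inr ⟨s, hs⟩) (.bel i ψ) ↔
        sat M s (.bel i ψ))) := by
  refine ⟨⟨?_, ?_⟩, ?_⟩
  · intro hf k
    exact esat_mono (fun w hw => hw.mpr hf)
      k _ (esat_inr M exec f Fo Po hdisj (M.val s f) k ⟨s, hs⟩ Iff.rfl)
  · intro hnf k
    exact esat_mono (fun w hw (hv : (senseSucc M exec f Fo Po).val w f) => hnf (hw.mp hv))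
      k _ (esat_inr M exec f Fo Po hdisj (M.val s f) k ⟨s, hs⟩ Iff.rfl)
  · intro i hiF hiP ψ
    constructor
    · intro H v hv
      exact (sat_inl M exec f Fo Po ψ v).mp (H (Sum.inl v) ⟨hiF, hiP, hv⟩)
    · intro H y hy
      cases y with
      | inl v => exact (sat_inl M exec f Fo Po ψ v).mpr (H v hy.2.2)
      | inr v =>
        rcases hy with ⟨h1, _⟩ | ⟨h1, _⟩
        · exact absurd h1 hiF
        · exact absurd h1 hiP
end

section
/- Let (M₁,s₁) and (M₂,s₂) be initial S5-states of a consistent and complete definite action theory, both in reduced form (distinct worlds have distinct valuations) with all worlds reachable from the designated world and with the same set of worlds M₁[S] = M₂[S] and identical valuations. Then M₁[i] = M₂[i] for every agent i; hence the initial S5-state of a consistent and complete definite action theory is unique up to equivalence, and it has at most 2^{|F|} worlds. -/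
/-- The forms of initial statements of a definite action theory:
`initially φ`, `initially C φ`, `initially C(B_i φ)`,
`initially C(B_i φ ∨ B_i ¬φ)`, `initially C(¬B_i φ ∧ ¬B_i ¬φ)`. -/
inductive InitStmt (A F : Type) : Type where
  | base : BForm A F → InitStmt A F
  | common : BForm A F → InitStmt A F
  | cBel : A → BForm A F → InitStmt A F
  | cWhether : A → BForm A F → InitStmt A F
  | cIgnorant : A → BForm A F → InitStmt A F

/-- The belief formula expressed by an initial statement (`C` is common
knowledge among all agents). -/
def InitStmt.form {A F : Type} : InitStmt A F → BForm A F
  | .base φ => φ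
  | .common φ => .cbel Set.univ φ
  | .cBel i φ => .cbel Set.univ (.bel i φ)
  | .cWhether i φ => .cbel Set.univ (.disj (.bel i φ) (.bel i (.neg φ)))
  | .cIgnorant i φ => .cbel Set.univ (.conj (.neg (.bel i φ)) (.neg (.bel i (.neg φ))))

/-- The fluent formula occurring in an initial statement. -/
def InitStmt.inner {A F : Type} : InitStmt A F → BForm A F
  | .base φ => φ
  | .common φ => φ
  | .cBel _ φ => φ
  | .cWhether _ φ => φ
  | .cIgnorant _ φ => φ

/-- A definite action theory: a set of initial statements whose embedded
formulae are fluent formulae, such that for each fluent formula `φ` and agent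
`i` one of the statements `C(B_i φ)`, `C(B_i φ ∨ B_i ¬φ)`,
`C(¬B_i φ ∧ ¬B_i ¬φ)` belongs to the theory. -/
structure DefiniteTheory (A F : Type) where
  stmts : Set (InitStmt A F)
  wf : ∀ st ∈ stmts, IsProp st.inner
  definite : ∀ φ : BForm A F, IsProp φ → ∀ i : A,
    InitStmt.cBel i φ ∈ stmts ∨ InitStmt.cWhether i φ ∈ stmts ∨ InitStmt.cIgnorant i φ ∈ stmts

/-- `(M,s)` is an initial state of the theory `T`: it satisfies every initial
statement of `T`. -/
def InitialState {A W F : Type} (T : DefiniteTheory A F) (M : Kripke A W F) (s : W) : Prop :=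
  ∀ st ∈ T.stmts, sat M s st.form

/-- A definite action theory is complete if for each fluent `f`, the literal
`f` or its negation appears in a statement of one of the forms
`initially φ`, `initially C φ`, `initially C(B_i φ)`, so that the literals of
these statements determine a complete interpretation of the fluents. -/
def DefiniteTheory.Complete {A F : Type} (T : DefiniteTheory A F) : Prop :=
  ∀ f : F,
    (InitStmt.base (.atom f) ∈ T.stmts ∨ InitStmt.common (.atom f) ∈ T.stmts ∨
      ∃ i : A, InitStmt.cBel i (.atom f) ∈ T.stmts) ∨
    (InitStmt.base (.neg (.atom f)) ∈ T.stmts ∨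
      InitStmt.common (.neg (.atom f)) ∈ T.stmts ∨
      ∃ i : A, InitStmt.cBel i (.neg (.atom f)) ∈ T.stmts)

open Classical in
noncomputable def lit {A W F : Type} (M : Kripke A W F) (v : W) (f : F) : BForm A F :=
  if M.val v f then .atom f else .neg (.atom f)

def conjList {A F : Type} : List (BForm A F) → BForm A F
  | [] => .top
  | φ :: l => .conj φ (conjList l)

lemma sat_conjList {A W F : Type} (M : Kripke A W F) (w : W) (l : List (BForm A F)) :
    sat M w (conjList l) ↔ ∀ φ ∈ l, sat M w φ := by
  induction l with
  | nil => simp [conjList, sat]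
  | cons φ l ih => simp [conjList, sat, ih]

lemma isProp_conjList {A F : Type} (l : List (BForm A F)) (h : ∀ φ ∈ l, IsProp φ) :
    IsProp (conjList l) := by
  induction l with
  | nil => trivial
  | cons φ l ih =>
      exact ⟨h φ (by simp), ih fun ψ hψ => h ψ (by simp [hψ])⟩

lemma isProp_lit {A W F : Type} (M : Kripke A W F) (v : W) (f : F) :
    IsProp (lit M v f) := by
  unfold lit; split <;> trivial

lemma sat_lit {A W F : Type} (M M' : Kripke A W F) (v : W) (w : W) (f : F) :
    sat M' w (lit M v f) ↔ (M'.val w f ↔ M.val v f) := by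
  unfold lit
  split <;> rename_i h <;> simp [sat, h]

/-- `state(v)`: the complete conjunction of literals of the valuation of `v`. -/
noncomputable def stateForm {A W F : Type} [Fintype F] (M : Kripke A W F) (v : W) : BForm A F :=
  conjList (Finset.univ.toList.map (lit M v))

lemma isProp_stateForm {A W F : Type} [Fintype F] (M : Kripke A W F) (v : W) :
    IsProp (stateForm (A := A) M v) := by
  apply isProp_conjList
  intro φ hφ
  simp only [List.mem_map] at hφ
  obtain ⟨f, _, rfl⟩ := hφ
  exact isProp_lit M v f

lemma sat_stateForm {A W F : Type} [Fintype F] (M M' : Kripke A W F) (v w : W) :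
    sat M' w (stateForm M v) ↔ M'.val w = M.val v := by
  rw [stateForm, sat_conjList]
  simp only [List.mem_map, Finset.mem_toList, Finset.mem_univ, true_and]
  constructor
  · intro h
    funext f
    exact propext ((sat_lit M M' v w f).mp (h _ ⟨f, rfl⟩))
  · rintro h φ ⟨f, rfl⟩
    rw [sat_lit, h]

/-- Common knowledge among all agents propagates along reachability. -/
lemma cbel_reach {A W F : Type} (M : Kripke A W F) {s u : W} (ψ : BForm A F)
    (h : sat M s (.cbel Set.univ ψ)) (hr : reach M s u) :
    sat M u (.cbel Set.univ ψ) := by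
  induction hr with
  | refl => exact h
  | tail _ hbc ih =>
      obtain ⟨i, hrel⟩ := hbc
      intro k
      exact ih (k + 1) i trivial _ hrel

lemma sat_of_cbel_reach {A W F : Type} (M : Kripke A W F) {s u : W} (ψ : BForm A F)
    (h : sat M s (.cbel Set.univ ψ)) (hr : reach M s u) : sat M u ψ :=
  cbel_reach M ψ h hr 0

/-- Key lemma: inclusion of accessibility relations. -/
lemma rel_sub {A F W : Type} [Fintype F] (T : DefiniteTheory A F)
    (M₁ M₂ : Kripke A W F) (s₁ s₂ : W)
    (hval : M₁.val = M₂.val) (hred : Function.Injective M₁.val)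
    (h5₁ : S5 M₁) (h5₂ : S5 M₂)
    (hr₁ : ∀ u : W, reach M₁ s₁ u) (hr₂ : ∀ u : W, reach M₂ s₂ u)
    (hI₁ : InitialState T M₁ s₁) (hI₂ : InitialState T M₂ s₂) :
    ∀ i u v, M₁.rel i u v → M₂.rel i u v := by
  intro i u v h₁
  by_contra h₂
  -- valuation-equality facts
  have hvv' : ∀ w : W, M₂.val w = M₁.val v → w = v := by
    intro w hw
    exact hred (by rw [hval]; exact hw.trans (congrFun hval v))
  -- Fact A: in M₂ at u, B_i ¬state(v)
  have factA : ∀ w, M₂.rel i u w → ¬ sat M₂ w (stateForm M₁ v) := by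
    intro w hw hsat
    have := hvv' w ((sat_stateForm M₁ M₂ v w).mp hsat)
    subst this
    exact h₂ hw
  -- Fact B: state(v) holds at v in M₁
  have factB : sat M₁ v (stateForm M₁ v) := (sat_stateForm M₁ M₁ v v).mpr rfl
  rcases T.definite (stateForm M₁ v) (isProp_stateForm M₁ v) i with hc | hc | hc
  · -- C(B_i state(v)) : in M₂ at u, B_i state(v); reflexivity forces u = v
    have hB : sat M₂ u (.bel i (stateForm M₁ v)) :=
      sat_of_cbel_reach M₂ _ (hI₂ _ hc) (hr₂ u)
    have : sat M₂ u (stateForm M₁ v) := hB u ((h5₂ i).refl u)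
    have huv : u = v := hvv' u ((sat_stateForm M₁ M₂ v u).mp this)
    exact h₂ (huv ▸ (h5₂ i).refl u)
  · -- C(B_i φ ∨ B_i ¬φ) : in M₁ at u, B_i ¬φ fails, so B_i φ, so u = v
    have hB : sat M₁ u (.disj (.bel i (stateForm M₁ v)) (.bel i (.neg (stateForm M₁ v)))) :=
      sat_of_cbel_reach M₁ _ (hI₁ _ hc) (hr₁ u)
    rcases hB with hB | hB
    · have : sat M₁ u (stateForm M₁ v) := hB u ((h5₁ i).refl u)
      have huv : u = v := hred ((sat_stateForm M₁ M₁ v u).mp this)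
      exact h₂ (huv ▸ (h5₂ i).refl u)
    · exact (hB v h₁) factB
  · -- C(¬B_i φ ∧ ¬B_i ¬φ) : in M₂ at u, ¬B_i ¬φ contradicts Fact A
    have hB : sat M₂ u (.conj (.neg (.bel i (stateForm M₁ v)))
        (.neg (.bel i (.neg (stateForm M₁ v))))) :=
      sat_of_cbel_reach M₂ _ (hI₂ _ hc) (hr₂ u)
    exact hB.2 factA

/-- An atom appearing positively in one of the three initial statement forms
holds at the initial state. -/
lemma stmt_atom {A W F : Type} {T : DefiniteTheory A F} {M : Kripke A W F} {s : W}
    (hI : InitialState T M s) (h5 : S5 M) (φ : BForm A F)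
    (h : InitStmt.base φ ∈ T.stmts ∨ InitStmt.common φ ∈ T.stmts ∨
      ∃ i : A, InitStmt.cBel i φ ∈ T.stmts) :
    sat M s φ := by
  rcases h with h | h | ⟨i, h⟩
  · exact hI _ h
  · exact hI _ h 0
  · exact hI _ h 0 s ((h5 i).refl s)

/-- Two initial S5-states of a complete definite action theory,
both in reduced form with the same worlds and valuations and with all worlds
reachable from the designated world, have identical accessibility relations;
hence the initial S5-state is unique up to equivalence and has at most
`2^{|F|}` worlds. -/
theorem stmt15 {A F W : Type} [Fintype F] (T : DefiniteTheory A F)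
    (hcomp : T.Complete)
    (M₁ M₂ : Kripke A W F) (s₁ s₂ : W)
    (hval : M₁.val = M₂.val) (hred : Function.Injective M₁.val)
    (h5₁ : S5 M₁) (h5₂ : S5 M₂)
    (hr₁ : ∀ u : W, reach M₁ s₁ u) (hr₂ : ∀ u : W, reach M₂ s₂ u)
    (hI₁ : InitialState T M₁ s₁) (hI₂ : InitialState T M₂ s₂) :
    (∀ i : A, M₁.rel i = M₂.rel i) ∧ equivState M₁ s₁ M₂ s₂ ∧
      Nat.card W ≤ 2 ^ Fintype.card F := by
  have hred₂ : Function.Injective M₂.val := hval ▸ hred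
  have hsub₁ : ∀ i u v, M₁.rel i u v → M₂.rel i u v :=
    rel_sub T M₁ M₂ s₁ s₂ hval hred h5₁ h5₂ hr₁ hr₂ hI₁ hI₂
  have hsub₂ : ∀ i u v, M₂.rel i u v → M₁.rel i u v :=
    rel_sub T M₂ M₁ s₂ s₁ hval.symm hred₂ h5₂ h5₁ hr₂ hr₁ hI₂ hI₁
  have hrel : ∀ i : A, M₁.rel i = M₂.rel i := by
    intro i
    funext u v
    exact propext ⟨hsub₁ i u v, hsub₂ i u v⟩
  -- the two structures are equal
  have hM : M₁ = M₂ := by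
    cases M₁; cases M₂
    simp only [Kripke.mk.injEq]
    exact ⟨hval, funext hrel⟩
  -- the designated worlds coincide (by completeness)
  have hs : s₁ = s₂ := by
    apply hred
    funext f
    apply propext
    rcases hcomp f with h | h
    · have h1 : sat M₁ s₁ (.atom f) := stmt_atom hI₁ h5₁ _ h
      have h2 : sat M₂ s₂ (.atom f) := stmt_atom hI₂ h5₂ _ h
      have h2' : M₁.val s₂ f := by rw [hval]; exact h2
      exact ⟨fun _ => h2', fun _ => h1⟩
    · have h1 : sat M₁ s₁ (.neg (.atom f)) := stmt_atom hI₁ h5₁ _ h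
      have h2 : sat M₂ s₂ (.neg (.atom f)) := stmt_atom hI₂ h5₂ _ h
      have h2' : ¬ M₁.val s₂ f := by rw [hval]; exact h2
      exact ⟨fun hx => absurd hx h1, fun hx => absurd hx h2'⟩
  refine ⟨hrel, ?_, ?_⟩
  · subst hM; subst hs
    intro φ; rfl
  · -- cardinality bound
    have e : (F → Prop) ≃ (F → Bool) :=
      Equiv.arrowCongr (Equiv.refl F) Equiv.propEquivBool
    have hfin : Finite (F → Prop) := Finite.of_equiv _ e.symm
    calc Nat.card W ≤ Nat.card (F → Prop) := Nat.card_le_card_of_injective _ hred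
      _ = Nat.card (F → Bool) := Nat.card_congr e
      _ = 2 ^ Fintype.card F := by
          classical
          rw [Nat.card_eq_fintype_card, Fintype.card_fun, Fintype.card_bool]
end
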